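/- For indeterminates x_1, …, x_t, the determinant of the t×t matrix whose (i,j) entry is the generalized binomial coefficient C(x_j, i) (for 1 ≤ i, j ≤ t) equals (∏_{j=1}^{t} x_j) · (∏_{1≤i<j≤t} (x_j − x_i)) / (∏_{k=1}^{t} k!), as an identity of polynomials in ℚ[x_1,…,x_t]. -/

import Mathlib

/-- Generalized binomial coefficient `C(x,k) = x(x-1)⋯(x-k+1)/k!` in a commutative ℚ-algebra. -/
noncomputable def gbinom {R : Type*} [CommRing R] [Algebra ℚ R] (x : R) (k : ℕ) : R :=
  algebraMap ℚ R ((k.factorial : ℚ)⁻¹) * ∏ i ∈ Finset.range k, (x - (i : R))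

open MvPolynomial in
theorem binomial_vandermonde_det (t : ℕ) :
    (Matrix.det (fun i j : Fin t => gbinom (X j : MvPolynomial (Fin t) ℚ) ((i : ℕ) + 1))) =
      MvPolynomial.C ((∏ k ∈ Finset.range t, ((k + 1).factorial : ℚ))⁻¹) *
        (∏ j : Fin t, X j) *
        ∏ i : Fin t, ∏ j ∈ Finset.Ioi i, (X j - X i) := by
  set R := MvPolynomial (Fin t) ℚ
  set p : Fin t → Polynomial R := fun i =>
    ∏ m ∈ Finset.range (i : ℕ), (Polynomial.X - Polynomial.C ((m + 1 : ℕ) : R)) with hp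
  have hmonic : ∀ i, (p i).Monic := fun i =>
    Polynomial.monic_prod_of_monic _ _ fun m _ => Polynomial.monic_X_sub_C _
  have hdeg : ∀ i : Fin t, (p i).natDegree = (i : ℕ) := by
    intro i
    rw [hp, Polynomial.natDegree_prod_of_monic _ _ fun m _ => Polynomial.monic_X_sub_C _]
    refine (Finset.sum_congr rfl fun m _ => Polynomial.natDegree_X_sub_C ((m + 1 : ℕ) : R)).trans ?_
    simp only [Polynomial.natDegree_X_sub_C, Finset.sum_const, smul_eq_mul, mul_one,
      Finset.card_range]
  have hentry : (fun i j : Fin t => gbinom (X j : R) ((i : ℕ) + 1)) =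
      Matrix.of fun i j : Fin t =>
        (MvPolynomial.C ((((i : ℕ) + 1).factorial : ℚ)⁻¹) : R) *
          ((X j : R) * (p i).eval (X j)) := by
    funext i j
    simp only [gbinom, Matrix.of_apply, Finset.prod_range_succ', Nat.cast_zero, sub_zero,
      MvPolynomial.algebraMap_eq, hp, Polynomial.eval_prod, Polynomial.eval_sub,
      Polynomial.eval_X, Polynomial.eval_natCast, Polynomial.eval_C]
    push_cast
    ring
  rw [hentry]; erw [Matrix.det_mul_column]
  rw [show (Matrix.det fun i j : Fin t => (X j : R) * Polynomial.eval (X j) (p i)) =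
      Matrix.det (Matrix.of fun i j : Fin t => (X j : R) *
        (Matrix.of fun i' j' : Fin t => Polynomial.eval (X j') (p i')) i j) from rfl,
    Matrix.det_mul_row]
  have hvdm : Matrix.det (Matrix.of fun i j : Fin t => (p i).eval (X j : R)) =
      ∏ i : Fin t, ∏ j ∈ Finset.Ioi i, ((X j : R) - X i) := by
    have htr : (Matrix.of fun i j : Fin t => (p i).eval (X j : R)) =
        (Matrix.of fun i j : Fin t => (p j).eval ((fun k : Fin t => (X k : R)) i)).transpose :=
      rfl
    rw [htr, Matrix.det_transpose,
      ← Matrix.det_eval_matrixOfPolynomials_eq_det_vandermonde _ p hdeg hmonic,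
      Matrix.det_vandermonde]
  have hc : (∏ i : Fin t, (MvPolynomial.C ((((i : ℕ) + 1).factorial : ℚ)⁻¹) : R)) =
      MvPolynomial.C ((∏ k ∈ Finset.range t, ((k + 1).factorial : ℚ))⁻¹) := by
    rw [← map_prod, ← Finset.prod_inv_distrib]
    exact congrArg _ (Fin.prod_univ_eq_prod_range (fun k => (((k + 1).factorial : ℚ))⁻¹) t)
  rw [hvdm, hc]
  ring
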